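/- arXiv:0807.4123 — 3 statements merged into one kernel-verified Lean document; each statement's English description precedes it below -/
import Mathlib

section
/- Let V be a commutative unital quantale and Φ a class of V-distributors satisfying (Ax1)–(Ax3). For every V-category (X,a), ΦX is closed in PX under Φ-weighted colimits: the inclusion V-functor i : ΦX → PX is Φ-cocontinuous, i.e. whenever φ : (W,d) ⇸ (Z,c) is in Φ, h : (W,d) → ΦX is a V-functor, and g : (Z,c) → ΦX satisfies g ≅ colim(φ,h) in ΦX, then i ∘ g ≅ colim(φ, i ∘ h) in PX. -/
universe u

/-- A commutative unital quantale: a complete lattice with a commutative monoid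
structure whose multiplication distributes over arbitrary suprema. -/
class CommQuantale (V : Type u) extends CompleteLattice V, CommMonoid V where
  mul_sSup : ∀ (x : V) (s : Set V), x * sSup s = ⨆ v ∈ s, x * v

variable {V : Type u} [CommQuantale V]

/-- The internal hom of the quantale: `qhom u v = sSup {w | u * w ≤ v}`. -/
def qhom (u v : V) : V := sSup {w | u * w ≤ v}

theorem mul_iSup' {ι : Sort*} (u : V) (v : ι → V) : u * (⨆ i, v i) = ⨆ i, u * v i := by
  rw [iSup, CommQuantale.mul_sSup, iSup_range]

theorem mul_mono_right' (u : V) {w w' : V} (h : w ≤ w') : u * w ≤ u * w' := by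
  have hs : sSup ({w, w'} : Set V) = w' := by
    apply le_antisymm
    · exact sSup_le (by rintro x (rfl | rfl); exacts [h, le_rfl])
    · exact le_sSup (by simp)
  have hm := CommQuantale.mul_sSup u ({w, w'} : Set V)
  rw [hs] at hm
  rw [hm]
  exact le_iSup₂ (f := fun v (_ : v ∈ ({w, w'} : Set V)) => u * v) w (by simp)

theorem mul_mono_left' {w w' : V} (h : w ≤ w') (u : V) : w * u ≤ w' * u := by
  rw [mul_comm w u, mul_comm w' u]; exact mul_mono_right' u h

theorem le_qhom_iff {u v w : V} : w ≤ qhom u v ↔ u * w ≤ v := by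
  constructor
  · intro h
    have h2 : u * qhom u v ≤ v := by
      rw [qhom, CommQuantale.mul_sSup]
      exact iSup₂_le fun w hw => hw
    exact le_trans (mul_mono_right' u h) h2
  · intro h; exact le_sSup h

theorem bot_mul' (u : V) : (⊥ : V) * u = ⊥ := by
  rw [mul_comm]
  have hm := CommQuantale.mul_sSup u (∅ : Set V)
  simpa using hm

/-- A `V`-category structure on `X`. -/
structure VCatStr (V : Type u) [CommQuantale V] (X : Type u) where
  hom : X → X → V
  refl : ∀ x, (1 : V) ≤ hom x x
  comp : ∀ x y z, hom x y * hom y z ≤ hom x z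

/-- `V`-functoriality. -/
def IsVFunctor {X Y : Type u} (a : VCatStr V X) (b : VCatStr V Y) (f : X → Y) : Prop :=
  ∀ x x', a.hom x x' ≤ b.hom (f x) (f x')

/-- `φ` is a `V`-distributor `(X,a) ⇸ (Y,b)`. -/
def IsDist {X Y : Type u} (a : VCatStr V X) (b : VCatStr V Y) (φ : X → Y → V) : Prop :=
  (∀ x' x y, a.hom x' x * φ x y ≤ φ x' y) ∧ (∀ x y y', φ x y * b.hom y y' ≤ φ x y')

/-- Composite `ψ ∘ φ` of distributors (`φ` first). -/
def dComp {X Y Z : Type u} (ψ : Y → Z → V) (φ : X → Y → V) : X → Z → V :=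
  fun x z => ⨆ y, φ x y * ψ y z

/-- The extension `γ ⟜ α`. -/
def dExt {X Y Z : Type u} (γ : X → Z → V) (α : X → Y → V) : Y → Z → V :=
  fun y z => ⨅ x, qhom (α x y) (γ x z)

/-- `f_*`. -/
def fStar {X Y : Type u} (b : VCatStr V Y) (f : X → Y) : X → Y → V :=
  fun x y => b.hom (f x) y

/-- `f^*`. -/
def fCostar {X Y : Type u} (b : VCatStr V Y) (f : X → Y) : Y → X → V :=
  fun y x => b.hom y (f x)

/-- `ψ ⊣ φ` is an adjunction of distributors, `ψ : (A,α) ⇸ (B,β)`, `φ : (B,β) ⇸ (A,α)`. -/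
def DistAdj {A B : Type u} (α : VCatStr V A) (β : VCatStr V B)
    (ψ : A → B → V) (φ : B → A → V) : Prop :=
  (∀ x x', α.hom x x' ≤ ⨆ y, ψ x y * φ y x') ∧
  (∀ y y', (⨆ x, φ y x * ψ x y') ≤ β.hom y y')

/-- `φ : (B,β) ⇸ (A,α)` is a right adjoint distributor. -/
def IsRightAdjDist {A B : Type u} (β : VCatStr V B) (α : VCatStr V A) (φ : B → A → V) : Prop :=
  ∃ ψ : A → B → V, IsDist α β ψ ∧ DistAdj α β ψ φ

/-- The pointwise order on `V`-functors. -/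
def VLe {X Y : Type u} (b : VCatStr V Y) (f g : X → Y) : Prop :=
  ∀ x, (1 : V) ≤ b.hom (f x) (g x)

/-- Equivalence of `V`-functors. -/
def VEquiv {X Y : Type u} (b : VCatStr V Y) (f g : X → Y) : Prop :=
  VLe b f g ∧ VLe b g f

def FullyFaithful {X Y : Type u} (a : VCatStr V X) (b : VCatStr V Y) (f : X → Y) : Prop :=
  ∀ x x', b.hom (f x) (f x') = a.hom x x'

def DenseF {X Y : Type u} (b : VCatStr V Y) (f : X → Y) : Prop :=
  ∀ y y', (⨆ x, b.hom y (f x) * b.hom (f x) y') = b.hom y y'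

/-- `f` is a left adjoint `V`-functor. -/
def LeftAdjointF {X Y : Type u} (a : VCatStr V X) (b : VCatStr V Y) (f : X → Y) : Prop :=
  ∃ g : Y → X, IsVFunctor b a g ∧ (∀ x, (1 : V) ≤ a.hom x (g (f x))) ∧
    (∀ y, (1 : V) ≤ b.hom (f (g y)) y)

/-- The one-point `V`-category `G`. -/
def unitCat (V : Type u) [CommQuantale V] : VCatStr V PUnit where
  hom _ _ := 1
  refl _ := le_refl 1
  comp _ _ _ := (one_mul 1).le

/-- Presheaves on `(X,a)`: distributors `(X,a) ⇸ G`. -/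
def IsPresheaf {X : Type u} (a : VCatStr V X) (ψ : X → V) : Prop :=
  ∀ x' x, a.hom x' x * ψ x ≤ ψ x'

/-- A class of `V`-distributors: for each pair of `V`-categories a predicate on maps. -/
def DistClass (V : Type u) [CommQuantale V] : Type (u + 1) :=
  ∀ ⦃X Y : Type u⦄, VCatStr V X → VCatStr V Y → (X → Y → V) → Prop

/-- The presheaf `ψ`, seen as distributor into `G`, lies in `Φ`. -/
def InPhi (Φ : DistClass V) {X : Type u} (a : VCatStr V X) (ψ : X → V) : Prop :=
  Φ a (unitCat V) (fun x _ => ψ x)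

/-- Axioms (Ax1)–(Ax3) on a class of distributors. -/
structure DistAx (Φ : DistClass V) : Prop where
  ax1 : ∀ {X Y : Type u} (a : VCatStr V X) (b : VCatStr V Y) (f : X → Y),
      IsVFunctor a b f → Φ b a (fCostar b f)
  ax2_left : ∀ {W X Y : Type u} (d : VCatStr V W) (a : VCatStr V X) (b : VCatStr V Y)
      (φ : W → Y → V) (f : X → Y), IsDist d b φ → IsVFunctor a b f → Φ d b φ →
      Φ d a (dComp (fCostar b f) φ)
  ax2_right : ∀ {X Y Z : Type u} (a : VCatStr V X) (b : VCatStr V Y) (c : VCatStr V Z)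
      (φ : X → Z → V) (f : X → Y), IsDist a c φ → IsVFunctor a b f → Φ a c φ →
      Φ b c (dComp φ (fCostar b f))
  ax2_star : ∀ {W X Z : Type u} (d : VCatStr V W) (a : VCatStr V X) (c : VCatStr V Z)
      (φ : X → Z → V) (f : W → X), IsDist a c φ → IsVFunctor d a f → Φ a c φ →
      Φ d a (fStar a f) → Φ d c (dComp φ (fStar a f))
  ax3 : ∀ {X Y : Type u} (a : VCatStr V X) (b : VCatStr V Y) (φ : X → Y → V),
      IsDist a b φ → (∀ y, Φ a (unitCat V) (fun x _ => φ x y)) → Φ a b φ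

/-- Axiom (Ax4): `f_* ∈ Φ` for every surjective `V`-functor `f`. -/
def Ax4 (Φ : DistClass V) : Prop :=
  ∀ {X Y : Type u} (a : VCatStr V X) (b : VCatStr V Y) (f : X → Y),
    IsVFunctor a b f → Function.Surjective f → Φ a b (fStar b f)

/-- `f` is `Φ`-dense. -/
def PhiDense (Φ : DistClass V) {X Y : Type u} (a : VCatStr V X) (b : VCatStr V Y)
    (f : X → Y) : Prop :=
  Φ a b (fStar b f)

/-- The `V`-category structure on `X → V`. -/
def funCat (V : Type u) [CommQuantale V] (X : Type u) : VCatStr V (X → V) where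
  hom ψ ψ' := ⨅ x, qhom (ψ x) (ψ' x)
  refl ψ := le_iInf fun x => le_qhom_iff.mpr (mul_one _).le
  comp ψ χ ω := le_iInf fun x => le_qhom_iff.mpr <| by
    calc ψ x * ((⨅ x', qhom (ψ x') (χ x')) * (⨅ x', qhom (χ x') (ω x')))
        = (ψ x * (⨅ x', qhom (ψ x') (χ x'))) * (⨅ x', qhom (χ x') (ω x')) :=
          (mul_assoc _ _ _).symm
      _ ≤ χ x * (⨅ x', qhom (χ x') (ω x')) :=
          mul_mono_left' (le_qhom_iff.mp (iInf_le (fun x' => qhom (ψ x') (χ x')) x)) _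
      _ ≤ ω x := le_qhom_iff.mp (iInf_le (fun x' => qhom (χ x') (ω x')) x)

/-- Full sub-`V`-category on a predicate. -/
def subCat {X : Type u} (a : VCatStr V X) (P : X → Prop) : VCatStr V {x : X // P x} where
  hom x y := a.hom x.1 y.1
  refl x := a.refl x.1
  comp x y z := a.comp x.1 y.1 z.1

/-- Carrier of the presheaf `V`-category `PX`. -/
def PCarrier {X : Type u} (a : VCatStr V X) : Type u := {ψ : X → V // IsPresheaf a ψ}

/-- The presheaf `V`-category `PX`. -/
def pCat {X : Type u} (a : VCatStr V X) : VCatStr V (PCarrier a) :=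
  subCat (funCat V X) (IsPresheaf a)

/-- Carrier of `ΦX`: presheaves lying in `Φ`. -/
def PhiCarrier (Φ : DistClass V) {X : Type u} (a : VCatStr V X) : Type u :=
  {ψ : X → V // IsPresheaf a ψ ∧ InPhi Φ a ψ}

/-- The `V`-category `ΦX`. -/
def phiCat (Φ : DistClass V) {X : Type u} (a : VCatStr V X) : VCatStr V (PhiCarrier Φ a) :=
  subCat (funCat V X) fun ψ => IsPresheaf a ψ ∧ InPhi Φ a ψ

/-- The inclusion `ΦX → PX`. -/
def phiIncl (Φ : DistClass V) {X : Type u} (a : VCatStr V X) : PhiCarrier Φ a → PCarrier a :=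
  fun ψ => ⟨ψ.1, ψ.2.1⟩

/-- The corestricted Yoneda functor `y^Φ_X : X → ΦX`. -/
def yPhi (Φ : DistClass V) (hΦ : DistAx Φ) {X : Type u} (a : VCatStr V X) (x : X) :
    PhiCarrier Φ a :=
  ⟨fun x' => a.hom x' x,
   fun x' x'' => a.comp x' x'' x,
   hΦ.ax1 (unitCat V) a (fun _ => x) (fun _ _ => a.refl x)⟩

/-- `Φf : ΦX → ΦY`, `ψ ↦ ψ ∘ f^*`. -/
def phiMap (Φ : DistClass V) (hΦ : DistAx Φ) {X Y : Type u} (a : VCatStr V X) (b : VCatStr V Y)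
    (f : X → Y) (hf : IsVFunctor a b f) (ψ : PhiCarrier Φ a) : PhiCarrier Φ b :=
  ⟨fun y => ⨆ x, b.hom y (f x) * ψ.1 x,
   by
    intro y' y
    rw [mul_iSup']
    refine iSup_le fun x => ?_
    refine le_trans ?_ (le_iSup _ x)
    calc b.hom y' y * (b.hom y (f x) * ψ.1 x)
        = (b.hom y' y * b.hom y (f x)) * ψ.1 x := (mul_assoc _ _ _).symm
      _ ≤ b.hom y' (f x) * ψ.1 x := mul_mono_left' (b.comp y' y (f x)) _,
   by
    have hd : IsDist a (unitCat V) (fun x (_ : PUnit) => ψ.1 x) :=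
      ⟨fun x' x _ => ψ.2.1 x' x, fun x _ _ => le_of_eq (mul_one _)⟩
    exact hΦ.ax2_right a b (unitCat V) _ f hd hf ψ.2.2⟩

/-- `g` is the `φ`-weighted colimit of `h`, i.e. `g_* = h_* ⟜ φ`. -/
def IsColimit {Y Z X : Type u} (_b : VCatStr V Y) (_c : VCatStr V Z) (a : VCatStr V X)
    (φ : Y → Z → V) (h : Y → X) (g : Z → X) : Prop :=
  ∀ z x, a.hom (g z) x = ⨅ y, qhom (φ y z) (a.hom (h y) x)

/-- `Φ`-cocompleteness. -/
def PhiCocomplete (Φ : DistClass V) {X : Type u} (a : VCatStr V X) : Prop :=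
  ∀ ⦃Y Z : Type u⦄ (b : VCatStr V Y) (c : VCatStr V Z) (φ : Y → Z → V) (h : Y → X),
    IsDist b c φ → Φ b c φ → IsVFunctor b a h →
    ∃ g : Z → X, IsVFunctor c a g ∧ IsColimit b c a φ h g

/-- `Φ`-cocontinuity. -/
def PhiCocontinuous (Φ : DistClass V) {X X' : Type u} (a : VCatStr V X) (a' : VCatStr V X')
    (f : X → X') : Prop :=
  ∀ ⦃Y Z : Type u⦄ (b : VCatStr V Y) (c : VCatStr V Z) (φ : Y → Z → V) (h : Y → X) (g : Z → X),
    IsDist b c φ → Φ b c φ → IsVFunctor b a h → IsVFunctor c a g →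
    IsColimit b c a φ h g → IsColimit b c a' φ (f ∘ h) (f ∘ g)

/-- `Φ`-injectivity. -/
def PhiInjective (Φ : DistClass V) {X : Type u} (a : VCatStr V X) : Prop :=
  ∀ ⦃A B : Type u⦄ (α : VCatStr V A) (β : VCatStr V B) (f : A → X) (i : A → B),
    IsVFunctor α a f → IsVFunctor α β i → FullyFaithful α β i → PhiDense Φ α β i →
    ∃ g : B → X, IsVFunctor β a g ∧ VEquiv a (g ∘ i) f

/-- Separatedness. -/
def Separated {X : Type u} (a : VCatStr V X) : Prop :=
  ∀ ⦃Y : Type u⦄ (b : VCatStr V Y) (f g : Y → X),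
    IsVFunctor b a f → IsVFunctor b a g → VEquiv a f g → f = g

theorem mul_qhom_le' (u v : V) : u * qhom u v ≤ v := le_qhom_iff.mp le_rfl

theorem one_le_qhom_iff' {u v : V} : (1 : V) ≤ qhom u v ↔ u ≤ v := by
  rw [le_qhom_iff, mul_one]

theorem isDist_fStar' {X Y : Type u} {a : VCatStr V X} {b : VCatStr V Y} {f : X → Y}
    (hf : IsVFunctor a b f) : IsDist a b (fStar b f) := by
  constructor
  · intro x' x y
    exact le_trans (mul_mono_left' (hf x' x) _) (b.comp _ _ _)
  · intro x y y'
    exact b.comp _ _ _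

theorem isDist_fCostar' {X Y : Type u} {a : VCatStr V X} {b : VCatStr V Y} {f : X → Y}
    (hf : IsVFunctor a b f) : IsDist b a (fCostar b f) := by
  constructor
  · intro y' y x
    exact b.comp _ _ _
  · intro y x x'
    exact le_trans (mul_mono_right' _ (hf x x')) (b.comp _ _ _)

theorem isDist_dComp' {X Y Z : Type u} {a : VCatStr V X} {b : VCatStr V Y} {c : VCatStr V Z}
    {φ : X → Y → V} {ψ : Y → Z → V} (hφ : IsDist a b φ) (hψ : IsDist b c ψ) :
    IsDist a c (dComp ψ φ) := by
  constructor
  · intro x' x z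
    rw [dComp, mul_iSup']
    refine iSup_le fun y => le_trans ?_ (le_iSup _ y)
    rw [← mul_assoc]
    exact mul_mono_left' (hφ.1 x' x y) _
  · intro x z z'
    rw [dComp, mul_comm _ (c.hom z z'), mul_iSup']
    refine iSup_le fun y => le_trans ?_ (le_iSup (fun y => φ x y * ψ y z') y)
    rw [mul_comm (c.hom z z'), mul_assoc]
    exact mul_mono_right' _ (hψ.2 y z z')

/-- Yoneda: `[y x, ψ] = ψ x`. -/
theorem yoneda' {X : Type u} (a : VCatStr V X) {ψ : X → V} (hψ : IsPresheaf a ψ) (x : X) :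
    (⨅ x', qhom (a.hom x' x) (ψ x')) = ψ x := by
  apply le_antisymm
  · refine le_trans (iInf_le _ x) ?_
    calc qhom (a.hom x x) (ψ x) = 1 * qhom (a.hom x x) (ψ x) := (one_mul _).symm
      _ ≤ a.hom x x * qhom (a.hom x x) (ψ x) := mul_mono_left' (a.refl x) _
      _ ≤ ψ x := mul_qhom_le' _ _
  · exact le_iInf fun x' => le_qhom_iff.mpr (hψ x' x)

theorem yPhi_functor' (Φ : DistClass V) (hΦ : DistAx Φ) {X : Type u} (a : VCatStr V X) :
    IsVFunctor a (phiCat Φ a) (yPhi Φ hΦ a) := by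
  intro x x'
  refine le_iInf fun x'' => le_qhom_iff.mpr ?_
  exact a.comp x'' x x'

theorem phiCat_hom_eq (Φ : DistClass V) {X : Type u} (a : VCatStr V X)
    (ψ ψ' : PhiCarrier Φ a) :
    (phiCat Φ a).hom ψ ψ' = ⨅ x, qhom (ψ.1 x) (ψ'.1 x) := rfl

/-- `ΦX` is closed in `PX` under `Φ`-weighted colimits: the inclusion is
`Φ`-cocontinuous. -/
theorem stmt15 (Φ : DistClass V) (hΦ : DistAx Φ) {X : Type u} (a : VCatStr V X) :
    ∀ ⦃W Z : Type u⦄ (d : VCatStr V W) (c : VCatStr V Z) (φ : W → Z → V)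
      (h : W → PhiCarrier Φ a) (g : Z → PhiCarrier Φ a),
      IsDist d c φ → Φ d c φ →
      IsVFunctor d (phiCat Φ a) h → IsVFunctor c (phiCat Φ a) g →
      IsColimit d c (phiCat Φ a) φ h g →
      IsColimit d c (pCat a) φ (phiIncl Φ a ∘ h) (phiIncl Φ a ∘ g) := by
  intro W Z d c φ h g hφd hφΦ hh hg hcol
  -- the pointwise colimit presheaf
  set L : Z → X → V := fun z x => ⨆ w, (h w).1 x * φ w z with hL
  -- L z is a presheaf
  have hLpre : ∀ z, IsPresheaf a (L z) := by
    intro z x' x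
    rw [hL]
    simp only
    rw [mul_iSup']
    refine iSup_le fun w => le_trans ?_ (le_iSup (fun w => (h w).1 x' * φ w z) w)
    rw [← mul_assoc]
    exact mul_mono_left' ((h w).2.1 x' x) _
  -- the Yoneda embedding into ΦX is Φ-dense
  have hyF : IsVFunctor a (phiCat Φ a) (yPhi Φ hΦ a) := yPhi_functor' Φ hΦ a
  have hyStarEval : ∀ (x : X) (ψ : PhiCarrier Φ a),
      fStar (phiCat Φ a) (yPhi Φ hΦ a) x ψ = ψ.1 x := by
    intro x ψ
    show (⨅ x', qhom (a.hom x' x) (ψ.1 x')) = ψ.1 x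
    exact yoneda' a ψ.2.1 x
  have hyStarPhi : Φ a (phiCat Φ a) (fStar (phiCat Φ a) (yPhi Φ hΦ a)) := by
    refine hΦ.ax3 a (phiCat Φ a) _ (isDist_fStar' hyF) fun ψ => ?_
    have : (fun x (_ : PUnit) => fStar (phiCat Φ a) (yPhi Φ hΦ a) x ψ)
        = fun x (_ : PUnit) => ψ.1 x := by
      funext x u; exact hyStarEval x ψ
    rw [this]
    exact ψ.2.2
  -- columns of φ lie in Φ
  have hφzDist : ∀ z, IsDist d (unitCat V) (fun w (_ : PUnit) => φ w z) := by
    intro z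
    exact ⟨fun w' w _ => hφd.1 w' w z, fun w _ _ => (mul_one _).le⟩
  have hφz : ∀ z, Φ d (unitCat V) (fun w (_ : PUnit) => φ w z) := by
    intro z
    have h1 := hΦ.ax2_left d (unitCat V) c φ (fun _ => z) hφd
      (fun _ _ => c.refl z) hφΦ
    have he : dComp (fCostar c (fun _ => z)) φ = fun w (_ : PUnit) => φ w z := by
      funext w u
      apply le_antisymm
      · exact iSup_le fun z' => hφd.2 w z' z
      · refine le_trans ?_ (le_iSup (fun z' => φ w z' * c.hom z' z) z)
        calc φ w z = φ w z * 1 := (mul_one _).symm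
          _ ≤ φ w z * c.hom z z := mul_mono_right' _ (c.refl z)
    rwa [he] at h1
  -- the composite φ_z ∘ h^*
  have hα : ∀ z, Φ (phiCat Φ a) (unitCat V)
      (dComp (fun w (_ : PUnit) => φ w z) (fCostar (phiCat Φ a) h)) := by
    intro z
    exact hΦ.ax2_right d (phiCat Φ a) (unitCat V) _ h (hφzDist z) hh (hφz z)
  have hαDist : ∀ z, IsDist (phiCat Φ a) (unitCat V)
      (dComp (fun w (_ : PUnit) => φ w z) (fCostar (phiCat Φ a) h)) := by
    intro z
    exact isDist_dComp' (isDist_fCostar' hh) (hφzDist z)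
  -- L z is in Φ
  have hLPhi : ∀ z, InPhi Φ a (L z) := by
    intro z
    have h2 := hΦ.ax2_star a (phiCat Φ a) (unitCat V)
      (dComp (fun w (_ : PUnit) => φ w z) (fCostar (phiCat Φ a) h))
      (yPhi Φ hΦ a) (hαDist z) hyF (hα z) hyStarPhi
    have he : dComp (dComp (fun w (_ : PUnit) => φ w z) (fCostar (phiCat Φ a) h))
        (fStar (phiCat Φ a) (yPhi Φ hΦ a)) = fun x (_ : PUnit) => L z x := by
      funext x u
      show (⨆ ψ, fStar (phiCat Φ a) (yPhi Φ hΦ a) x ψ *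
          (⨆ w, fCostar (phiCat Φ a) h ψ w * φ w z)) = L z x
      apply le_antisymm
      · refine iSup_le fun ψ => ?_
        rw [hyStarEval x ψ, mul_iSup']
        refine iSup_le fun w => le_trans ?_ (le_iSup (fun w => (h w).1 x * φ w z) w)
        rw [← mul_assoc]
        refine mul_mono_left' ?_ _
        calc ψ.1 x * fCostar (phiCat Φ a) h ψ w
            ≤ ψ.1 x * qhom (ψ.1 x) ((h w).1 x) :=
              mul_mono_right' _ (iInf_le (fun x' => qhom (ψ.1 x') ((h w).1 x')) x)
          _ ≤ (h w).1 x := mul_qhom_le' _ _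
      · refine iSup_le fun w => le_trans ?_ (le_iSup _ (h w))
        rw [hyStarEval x (h w)]
        refine mul_mono_right' _ ?_
        refine le_trans ?_ (le_iSup (fun w' => fCostar (phiCat Φ a) h (h w) w' * φ w' z) w)
        calc φ w z = 1 * φ w z := (one_mul _).symm
          _ ≤ fCostar (phiCat Φ a) h (h w) w * φ w z :=
              mul_mono_left' ((phiCat Φ a).refl (h w)) _
    rwa [he] at h2
  -- g z equals L z pointwise
  have hgL : ∀ z x, (g z).1 x = L z x := by
    intro z x
    set Lz : PhiCarrier Φ a := ⟨L z, hLpre z, hLPhi z⟩ with hLz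
    apply le_antisymm
    · -- use hcol at Lz
      have h3 := hcol z Lz
      have h4 : (1 : V) ≤ ⨅ w, qhom (φ w z) ((phiCat Φ a).hom (h w) Lz) := by
        refine le_iInf fun w => le_qhom_iff.mpr ?_
        rw [mul_one]
        refine le_iInf fun x' => le_qhom_iff.mpr ?_
        exact le_iSup (fun w => (h w).1 x' * φ w z) w
      rw [← h3] at h4
      have h5 := le_trans h4 (iInf_le (fun x' => qhom ((g z).1 x') (L z x')) x)
      rw [one_le_qhom_iff'] at h5
      exact h5
    · -- use hcol at g z itself
      have h3 := hcol z (g z)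
      have h4 : (1 : V) ≤ ⨅ w, qhom (φ w z) ((phiCat Φ a).hom (h w) (g z)) := by
        rw [← h3]; exact (phiCat Φ a).refl (g z)
      refine iSup_le fun w => ?_
      have h5 : φ w z ≤ (phiCat Φ a).hom (h w) (g z) := by
        have := le_trans h4 (iInf_le _ w)
        rw [le_qhom_iff, mul_one] at this
        exact this
      have h6 : φ w z ≤ qhom ((h w).1 x) ((g z).1 x) :=
        le_trans h5 (iInf_le (fun x' => qhom ((h w).1 x') ((g z).1 x')) x)
      exact le_qhom_iff.mp h6
  -- conclude
  intro z ψ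
  show (⨅ x, qhom ((g z).1 x) (ψ.1 x))
      = ⨅ w, qhom (φ w z) (⨅ x, qhom ((h w).1 x) (ψ.1 x))
  have hrw : (⨅ x, qhom ((g z).1 x) (ψ.1 x)) = ⨅ x, qhom (L z x) (ψ.1 x) := by
    refine iInf_congr fun x => ?_
    rw [hgL z x]
  rw [hrw]
  apply le_antisymm
  · refine le_iInf fun w => le_qhom_iff.mpr (le_iInf fun x => le_qhom_iff.mpr ?_)
    rw [← mul_assoc]
    calc (h w).1 x * φ w z * ⨅ x', qhom (L z x') (ψ.1 x')
        ≤ L z x * ⨅ x', qhom (L z x') (ψ.1 x') :=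
          mul_mono_left' (le_iSup (fun w => (h w).1 x * φ w z) w) _
      _ ≤ L z x * qhom (L z x) (ψ.1 x) :=
          mul_mono_right' _ (iInf_le (fun x' => qhom (L z x') (ψ.1 x')) x)
      _ ≤ ψ.1 x := mul_qhom_le' _ _
  · refine le_iInf fun x => le_qhom_iff.mpr ?_
    rw [hL]
    simp only
    rw [mul_comm, mul_iSup']
    refine iSup_le fun w => ?_
    set B := ⨅ w, qhom (φ w z) (⨅ x, qhom ((h w).1 x) (ψ.1 x)) with hB
    have h7 : φ w z * B ≤ qhom ((h w).1 x) (ψ.1 x) := by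
      refine le_trans (le_qhom_iff.mp (iInf_le _ w)) ?_
      exact iInf_le (fun x' => qhom ((h w).1 x') (ψ.1 x')) x
    calc B * ((h w).1 x * φ w z) = (h w).1 x * (φ w z * B) := by
          rw [mul_comm B, mul_assoc]
      _ ≤ (h w).1 x * qhom ((h w).1 x) (ψ.1 x) := mul_mono_right' _ h7
      _ ≤ ψ.1 x := mul_qhom_le' _ _
end

section
/- Let V be a commutative unital quantale. Call a V-distributor φ : (X,a) ⇸ (Y,b) inhabited if k ≤ ⨆ x, φ x y for every y ∈ Y. Then the class of inhabited V-distributors satisfies the axioms (Ax1), (Ax2), (Ax3) and (Ax4): (Ax1) f^* is inhabited for every V-functor f; (Ax2) if φ is inhabited and f is a V-functor then f^* ∘ φ and φ ∘ f^* are inhabited (when defined), and φ ∘ f_* is inhabited whenever moreover f_* is inhabited; (Ax3) if for every y ∈ Y the presheaf φ (—) y : (X,a) ⇸ G is inhabited, then φ is inhabited; (Ax4) f_* is inhabited for every surjective V-functor f. -/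
universe u

variable {V : Type u} [CommQuantale V]

/-- The class of inhabited `V`-distributors. -/
def InhabD (V : Type u) [CommQuantale V] : DistClass V :=
  fun _ _ _ _ φ => ∀ y, (1 : V) ≤ ⨆ x, φ x y

/-- The class of inhabited distributors satisfies (Ax1)–(Ax4). -/
theorem stmt18 (V : Type u) [CommQuantale V] :
    DistAx (InhabD V) ∧ Ax4 (InhabD V) := by
  constructor
  · constructor
    · -- ax1
      intro X Y a b f hf x
      exact le_trans (b.refl (f x)) (le_iSup (fun y => fCostar b f y x) (f x))
    · -- ax2_left
      intro W X Y d a b φ f hφd hf hφ x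
      refine le_trans (hφ (f x)) (iSup_le fun w => ?_)
      refine le_trans ?_ (le_iSup _ w)
      refine le_trans ?_ (le_iSup (fun y => φ w y * fCostar b f y x) (f x))
      calc φ w (f x) = φ w (f x) * 1 := (mul_one _).symm
        _ ≤ φ w (f x) * b.hom (f x) (f x) := mul_mono_right' _ (b.refl (f x))
    · -- ax2_right
      intro X Y Z a b c φ f hφd hf hφ z
      refine le_trans (hφ z) (iSup_le fun x => ?_)
      refine le_trans ?_ (le_iSup _ (f x))
      refine le_trans ?_ (le_iSup (fun x' => fCostar b f (f x) x' * φ x' z) x)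
      calc φ x z = 1 * φ x z := (one_mul _).symm
        _ ≤ b.hom (f x) (f x) * φ x z := mul_mono_left' (b.refl (f x)) _
    · -- ax2_star
      intro W X Z d a c φ f hφd hf hφ hfs z
      refine le_trans (hφ z) (iSup_le fun x => ?_)
      calc φ x z = 1 * φ x z := (one_mul _).symm
        _ ≤ (⨆ w, a.hom (f w) x) * φ x z := mul_mono_left' (hfs x) _
        _ = ⨆ w, a.hom (f w) x * φ x z := by
            rw [mul_comm, mul_iSup']; exact iSup_congr fun w => mul_comm _ _
        _ ≤ ⨆ w, ⨆ x', fStar a f w x' * φ x' z :=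
            iSup_mono fun w => le_iSup (fun x' => fStar a f w x' * φ x' z) x
    · -- ax3
      intro X Y a b φ hφd h y
      exact h y PUnit.unit
  · -- Ax4
    intro X Y a b f hf hs y
    obtain ⟨x, rfl⟩ := hs y
    exact le_trans (b.refl (f x)) (le_iSup (fun x' => fStar b f x' (f x)) x)
end

section
/- Let V be a commutative unital quantale. Let φ : (Y,b) ⇸ (Z,c) be a right adjoint V-distributor, h : (Y,b) → (X,a) a V-functor, and g : (Z,c) → (X,a) a V-functor with g_* = h_* ⟜ φ (i.e. g ≅ colim(φ,h)). Then for every V-functor f : (X,a) → (W,w) one has (f ∘ g)_* = (f ∘ h)_* ⟜ φ (i.e. f ∘ g ≅ colim(φ, f ∘ h)); in other words, colimits weighted by right adjoint distributors are absolute: they are preserved by every V-functor. -/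
universe u

variable {V : Type u} [CommQuantale V]

/-- Colimits weighted by right adjoint distributors are absolute. -/
theorem stmt19 {Y Z X W : Type u}
    (b : VCatStr V Y) (c : VCatStr V Z) (a : VCatStr V X) (w : VCatStr V W)
    (φ : Y → Z → V) (h : Y → X) (g : Z → X) (f : X → W)
    (hφ : IsDist b c φ) (hra : IsRightAdjDist b c φ)
    (hh : IsVFunctor b a h) (hg : IsVFunctor c a g) (hf : IsVFunctor a w f)
    (hcol : IsColimit b c a φ h g) :
    IsColimit b c w φ (f ∘ h) (f ∘ g) := by
  obtain ⟨ψ, hψd, hadj⟩ := hra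
  intro z x
  -- key: φ y z ≤ a.hom (h y) (g z)
  have key1 : ∀ y, φ y z ≤ a.hom (h y) (g z) := by
    intro y
    have h1 : a.hom (g z) (g z) ≤ qhom (φ y z) (a.hom (h y) (g z)) := by
      rw [hcol z (g z)]; exact iInf_le _ y
    have h2 : (1 : V) ≤ qhom (φ y z) (a.hom (h y) (g z)) :=
      le_trans (a.refl (g z)) h1
    calc φ y z = φ y z * 1 := (mul_one _).symm
      _ ≤ φ y z * qhom (φ y z) (a.hom (h y) (g z)) := mul_mono_right' _ h2
      _ ≤ a.hom (h y) (g z) := le_qhom_iff.mp le_rfl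
  -- key: ψ z y ≤ a.hom (g z) (h y)
  have key2 : ∀ y, ψ z y ≤ a.hom (g z) (h y) := by
    intro y
    rw [hcol z (h y)]
    refine le_iInf fun y' => le_qhom_iff.mpr ?_
    have hcu : φ y' z * ψ z y ≤ b.hom y' y := by
      refine le_trans ?_ (hadj.2 y' y)
      exact le_iSup (fun z' => φ y' z' * ψ z' y) z
    exact le_trans hcu (hh y' y)
  apply le_antisymm
  · refine le_iInf fun y => le_qhom_iff.mpr ?_
    calc φ y z * w.hom ((f ∘ g) z) x
        ≤ w.hom (f (h y)) (f (g z)) * w.hom (f (g z)) x :=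
          mul_mono_left' (le_trans (key1 y) (hf _ _)) _
      _ ≤ w.hom ((f ∘ h) y) x := w.comp _ _ _
  · set t := ⨅ y, qhom (φ y z) (w.hom ((f ∘ h) y) x) with ht
    have hunit : (1 : V) ≤ ⨆ y, ψ z y * φ y z :=
      le_trans (c.refl z) (hadj.1 z z)
    calc t = 1 * t := (one_mul t).symm
      _ ≤ (⨆ y, ψ z y * φ y z) * t := mul_mono_left' hunit t
      _ = ⨆ y, (ψ z y * φ y z) * t := by
          rw [mul_comm _ t, mul_iSup']; exact iSup_congr fun y => mul_comm _ _
      _ ≤ w.hom ((f ∘ g) z) x := by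
          refine iSup_le fun y => ?_
          calc ψ z y * φ y z * t
              = ψ z y * (φ y z * t) := mul_assoc _ _ _
            _ ≤ ψ z y * w.hom ((f ∘ h) y) x := by
                refine mul_mono_right' _ ?_
                refine le_qhom_iff.mp ?_
                exact iInf_le _ y
            _ ≤ w.hom (f (g z)) (f (h y)) * w.hom (f (h y)) x :=
                mul_mono_left' (le_trans (key2 y) (hf _ _)) _
            _ ≤ w.hom ((f ∘ g) z) x := w.comp _ _ _
end
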